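/- Let H be a countably infinite index set with an increasing sequence of finite subsets H_1 ⊂ H_2 ⊂ ⋯ with ⋃_L H_L = H, and let D, G be infinite complex matrices indexed by H satisfying conditions (D) and (G'). Then the infinite Q-system ∏_{j∈H} Q_j(w)^{D_{ij}} + w_i ∏_{j∈H} Q_j(w)^{G_{ij}} = 1 (i ∈ H) has a unique canonical solution, and it is given by Q_i(w) = ∏_{j∈H} (Q'_j(w))^{(D^{-1})_{ij}}, where (Q'_i(w))_{i∈H} is the unique solution with unit constant terms of the standard infinite Q-system Q'_i(w) + w_i ∏_{j∈H} (Q'_j(w))^{G'_{ij}} = 1 with G' = GD^{-1}. -/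

import Mathlib

noncomputable def binomC (a : ℂ) (b : ℕ) : ℂ :=
  (∏ j ∈ Finset.range b, (a - (j : ℂ))) / (Nat.factorial b : ℂ)

noncomputable def cpow {σ : Type*} (f : MvPowerSeries σ ℂ) (α : ℂ) : MvPowerSeries σ ℂ :=
  fun N => ∑ k ∈ Finset.range (N.sum (fun _ e => e) + 1),
    binomC α k * MvPowerSeries.coeff N ((f - 1) ^ k)

/-- `HasProdPS f P`: the (possibly infinite) product of the family `f` converges to `P`
in the projective-limit topology on formal power series, i.e. every coefficient of the
finite partial products eventually stabilizes at the corresponding coefficient of `P`,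
irrespective of the order of the product. -/
def HasProdPS {ι σ : Type*} (f : ι → MvPowerSeries σ ℂ) (P : MvPowerSeries σ ℂ) : Prop :=
  ∀ N : σ →₀ ℕ, ∃ s : Finset ι, ∀ t : Finset ι, s ⊆ t →
    MvPowerSeries.coeff N (∏ j ∈ t, f j) = MvPowerSeries.coeff N P

/-- A family `(Q_i)` with unit constant terms is a solution of the standard infinite
`Q`-system `Q_i + w_i ∏_j Q_j^{G_{ij}} = 1` (the infinite products being required to
converge). -/
def InfStdSys {H : Type*} (G : H → H → ℂ) (Q : H → MvPowerSeries H ℂ) : Prop :=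
  (∀ i, MvPowerSeries.constantCoeff (Q i) = 1) ∧
  ∀ i, ∃ P, HasProdPS (fun j => cpow (Q j) (G i j)) P ∧
    Q i + MvPowerSeries.X i * P = 1

/-- A family `(Q_i)` with unit constant terms is a solution of the infinite `Q`-system
`∏_j Q_j^{D_{ij}} + w_i ∏_j Q_j^{G_{ij}} = 1` (the infinite products being required to
converge). -/
def InfSys {H : Type*} (D G : H → H → ℂ) (Q : H → MvPowerSeries H ℂ) : Prop :=
  (∀ i, MvPowerSeries.constantCoeff (Q i) = 1) ∧
  ∀ i, ∃ P₁ P₂, HasProdPS (fun j => cpow (Q j) (D i j)) P₁ ∧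
    HasProdPS (fun j => cpow (Q j) (G i j)) P₂ ∧
    P₁ + MvPowerSeries.X i * P₂ = 1

/-- The inversion property of a solution: for each `i`, the iterated infinite product
`∏_j (∏_k Q_k^{(D⁻¹)_{ij} D_{jk}})` exists and equals `Q_i`. -/
def IsCanonicalPS {ι σ : Type*} (Dinv D : ι → ι → ℂ) (Q : ι → MvPowerSeries σ ℂ) : Prop :=
  ∀ i, ∃ inner : ι → MvPowerSeries σ ℂ,
    (∀ j, HasProdPS (fun k => cpow (Q k) (Dinv i j * D j k)) (inner j)) ∧
    HasProdPS inner (Q i)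

/-- Condition (D): `Dinv` is a two-sided inverse of the infinite matrix `D`, all the sums
involved having finitely many nonzero terms. -/
def InvPair {H : Type*} [DecidableEq H] (D Dinv : H → H → ℂ) : Prop :=
  (∀ i k, ({j | D i j * Dinv j k ≠ 0} : Set H).Finite ∧
    ∑ᶠ j, D i j * Dinv j k = if i = k then (1 : ℂ) else 0) ∧
  (∀ i k, ({j | Dinv i j * D j k ≠ 0} : Set H).Finite ∧
    ∑ᶠ j, Dinv i j * D j k = if i = k then (1 : ℂ) else 0)

/-- Condition (G'): the matrix product `G' = G · Dinv` is well-defined, i.e. for each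
`i, k` all but finitely many `G_{ij} (D⁻¹)_{jk}` vanish, and its value is `G'`. -/
def MulDef {H : Type*} (G Dinv G' : H → H → ℂ) : Prop :=
  ∀ i k, ({j | G i j * Dinv j k ≠ 0} : Set H).Finite ∧
    ∑ᶠ j, G i j * Dinv j k = G' i k

/-- The projection `p_L : ℂ[[w]] → ℂ[[w_L]]` (realized as a self-map of `ℂ[[w]]`),
sending `w_i ↦ w_i` for `i ∈ s` and `w_i ↦ 0` otherwise. -/
noncomputable def projL {H : Type*} [DecidableEq H] (s : Finset H)
    (f : MvPowerSeries H ℂ) : MvPowerSeries H ℂ :=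
  fun N => if N.support ⊆ s then MvPowerSeries.coeff N f else 0



set_option linter.unusedSectionVars false

open MvPowerSeries Finset

section Aux
variable {σ : Type*} [DecidableEq σ]

def degN {σ : Type*} (N : σ →₀ ℕ) : ℕ := N.sum fun _ e => e

lemma degN_add (M N : σ →₀ ℕ) : degN (M + N) = degN M + degN N :=
  Finsupp.sum_add_index' (fun _ => rfl) (fun _ _ _ => rfl)

lemma degN_pos {N : σ →₀ ℕ} (h : N ≠ 0) : 1 ≤ degN N := by
  obtain ⟨a, ha⟩ := Finsupp.ne_iff.1 h
  simp only [Finsupp.coe_zero, Pi.zero_apply] at ha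
  calc 1 ≤ N a := Nat.one_le_iff_ne_zero.2 ha
  _ ≤ degN N := Finset.single_le_sum (f := fun a => N a) (fun _ _ => Nat.zero_le _)
      (Finsupp.mem_support_iff.2 ha)

lemma degN_mono {M N : σ →₀ ℕ} (h : M ≤ N) : degN M ≤ degN N := by
  have : M + (N - M) = N := add_tsub_cancel_of_le h
  calc degN M ≤ degN M + degN (N - M) := Nat.le_add_right _ _
  _ = degN N := by rw [← degN_add, this]

lemma coeff_pow_eq_zero {u : MvPowerSeries σ ℂ} (hu : constantCoeff u = 0) :
    ∀ k (N : σ →₀ ℕ), degN N < k → coeff N (u ^ k) = 0 := by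
  intro k
  induction k with
  | zero => intro N h; omega
  | succ k ih =>
    intro N h
    rw [pow_succ, coeff_mul]
    refine Finset.sum_eq_zero fun p hp => ?_
    rw [Finset.HasAntidiagonal.mem_antidiagonal] at hp
    rcases eq_or_ne p.2 0 with h2 | h2
    · have : coeff p.2 u = 0 := by rw [h2, coeff_zero_eq_constantCoeff, hu]
      rw [this, mul_zero]
    · have hd : degN p.1 < k := by
        have := degN_pos h2
        have hsum : degN p.1 + degN p.2 = degN N := by rw [← degN_add, hp]
        omega
      rw [ih p.1 hd, zero_mul]

lemma coeff_cpow (f : MvPowerSeries σ ℂ) (α : ℂ) (N : σ →₀ ℕ) :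
    coeff N (cpow f α) =
      ∑ k ∈ Finset.range (degN N + 1), binomC α k * coeff N ((f - 1) ^ k) := by
  rw [coeff_apply]; rfl

lemma coeff_cpow_ge {f : MvPowerSeries σ ℂ} (hf : constantCoeff f = 1) (α : ℂ)
    {N : σ →₀ ℕ} {m : ℕ} (hm : degN N < m) :
    coeff N (cpow f α) = ∑ k ∈ Finset.range m, binomC α k * coeff N ((f - 1) ^ k) := by
  rw [coeff_cpow]
  refine Finset.sum_subset (Finset.range_subset_range.2 (by omega)) fun k hk hk' => ?_
  simp only [Finset.mem_range] at hk hk'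
  have : degN N < k := by omega
  rw [coeff_pow_eq_zero (by simp [hf]) k N this, mul_zero]

lemma binomC_zero (α : ℂ) : binomC α 0 = 1 := by simp [binomC]

lemma constantCoeff_cpow (f : MvPowerSeries σ ℂ) (α : ℂ) :
    constantCoeff (cpow f α) = 1 := by
  rw [← coeff_zero_eq_constantCoeff, coeff_cpow]
  have h0 : degN (0 : σ →₀ ℕ) = 0 := by simp [degN]
  rw [h0]
  simp [binomC_zero]

lemma binomC_natCast (n k : ℕ) : binomC (n : ℂ) k = (n.choose k : ℂ) := by
  rcases le_or_gt k n with h | h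
  · have hprod : (∏ j ∈ Finset.range k, ((n : ℂ) - (j : ℂ))) = (n.descFactorial k : ℂ) := by
      rw [Nat.descFactorial_eq_prod_range, Nat.cast_prod]
      refine Finset.prod_congr rfl fun j hj => ?_
      rw [Finset.mem_range] at hj
      rw [Nat.cast_sub (by omega)]
    rw [binomC, hprod, Nat.descFactorial_eq_factorial_mul_choose, Nat.cast_mul, mul_comm,
      mul_div_assoc, div_self (Nat.cast_ne_zero.2 (Nat.factorial_ne_zero k)), mul_one]
  · have : (∏ j ∈ Finset.range k, ((n : ℂ) - (j : ℂ))) = 0 := by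
      apply Finset.prod_eq_zero (Finset.mem_range.2 h)
      simp
    rw [binomC, this, zero_div, Nat.choose_eq_zero_of_lt h, Nat.cast_zero]

lemma cpow_natCast {f : MvPowerSeries σ ℂ} (hf : constantCoeff f = 1) (n : ℕ) :
    cpow f (n : ℂ) = f ^ n := by
  ext N
  have hfn : f ^ n = ∑ k ∈ Finset.range (n + 1), (n.choose k : ℂ) • (f - 1) ^ k := by
    conv_lhs => rw [show f = (f - 1) + 1 by ring, add_pow]
    refine Finset.sum_congr rfl fun k _ => ?_
    rw [one_pow, mul_one, mul_comm, ← nsmul_eq_mul, ← Nat.cast_smul_eq_nsmul ℂ]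
  rw [coeff_cpow_ge hf _ (show degN N < max (n+1) (degN N + 1) by omega), hfn, map_sum]
  have : ∀ k, coeff N ((n.choose k : ℂ) • (f - 1) ^ k)
      = (n.choose k : ℂ) * coeff N ((f - 1) ^ k) := fun k => by
    rw [LinearMap.map_smul, smul_eq_mul]
  rw [Finset.sum_congr rfl fun k _ => this k]
  rw [show (∑ k ∈ Finset.range (n+1), (n.choose k : ℂ) * coeff N ((f-1)^k))
      = ∑ k ∈ Finset.range (max (n+1) (degN N + 1)), (n.choose k : ℂ) * coeff N ((f-1)^k) from
    Finset.sum_subset (Finset.range_subset_range.2 (le_max_left _ _)) fun k hk hk' => by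
      simp only [Finset.mem_range] at hk hk'
      rw [Nat.choose_eq_zero_of_lt (by omega), Nat.cast_zero, zero_mul]]
  exact Finset.sum_congr rfl fun k _ => by rw [binomC_natCast]

end Aux

def PolyFun (F : ℂ → ℂ) : Prop := ∃ p : Polynomial ℂ, ∀ x, F x = p.eval x

namespace PolyFun

lemma const (c : ℂ) : PolyFun (fun _ => c) := ⟨Polynomial.C c, by simp⟩
lemma id' : PolyFun (fun x => x) := ⟨Polynomial.X, by simp⟩
lemma add {F G} (hF : PolyFun F) (hG : PolyFun G) : PolyFun (fun x => F x + G x) := by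
  obtain ⟨p, hp⟩ := hF; obtain ⟨q, hq⟩ := hG
  exact ⟨p + q, fun x => by simp [hp, hq]⟩
lemma mul {F G} (hF : PolyFun F) (hG : PolyFun G) : PolyFun (fun x => F x * G x) := by
  obtain ⟨p, hp⟩ := hF; obtain ⟨q, hq⟩ := hG
  exact ⟨p * q, fun x => by simp [hp, hq]⟩
lemma sub {F G} (hF : PolyFun F) (hG : PolyFun G) : PolyFun (fun x => F x - G x) := by
  obtain ⟨p, hp⟩ := hF; obtain ⟨q, hq⟩ := hG
  exact ⟨p - q, fun x => by simp [hp, hq]⟩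
lemma sum {ι : Type*} (s : Finset ι) (F : ι → ℂ → ℂ) (h : ∀ i ∈ s, PolyFun (F i)) :
    PolyFun (fun x => ∑ i ∈ s, F i x) := by
  classical
  induction s using Finset.induction_on with
  | empty => simpa using const 0
  | @insert a s hnot ih =>
    simp only [Finset.sum_insert hnot]
    exact (h a (Finset.mem_insert_self a s)).add
      (ih fun i hi => h i (Finset.mem_insert_of_mem hi))
lemma prod {ι : Type*} (s : Finset ι) (F : ι → ℂ → ℂ) (h : ∀ i ∈ s, PolyFun (F i)) :
    PolyFun (fun x => ∏ i ∈ s, F i x) := by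
  classical
  induction s using Finset.induction_on with
  | empty => simpa using const 1
  | @insert a s hnot ih =>
    simp only [Finset.prod_insert hnot]
    exact (h a (Finset.mem_insert_self a s)).mul
      (ih fun i hi => h i (Finset.mem_insert_of_mem hi))

lemma binomC' {F : ℂ → ℂ} (hF : PolyFun F) (k : ℕ) : PolyFun (fun x => binomC (F x) k) := by
  have : (fun x => binomC (F x) k)
      = fun x => (∏ j ∈ Finset.range k, (F x - (j : ℂ))) * ((Nat.factorial k : ℂ))⁻¹ := by
    funext x; rw [binomC, div_eq_mul_inv]
  rw [this]
  exact (prod _ _ (fun j _ => hF.sub (const _))).mul (const _)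

lemma eq_on_nat {F G : ℂ → ℂ} (hF : PolyFun F) (hG : PolyFun G)
    (h : ∀ n : ℕ, F (n : ℂ) = G (n : ℂ)) : ∀ x, F x = G x := by
  obtain ⟨p, hp⟩ := hF; obtain ⟨q, hq⟩ := hG
  have hpq : p - q = 0 := by
    apply Polynomial.eq_zero_of_infinite_isRoot
    refine (Set.infinite_range_of_injective (f := (Nat.cast : ℕ → ℂ))
      Nat.cast_injective).mono ?_
    rintro x ⟨n, rfl⟩
    simp only [Set.mem_setOf_eq, Polynomial.IsRoot, Polynomial.eval_sub, sub_eq_zero, ← hp, ← hq]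
    exact h n
  intro x
  have := congrArg (Polynomial.eval x) hpq
  simp only [Polynomial.eval_sub, Polynomial.eval_zero, sub_eq_zero] at this
  rw [hp, hq, this]

end PolyFun

section CpowAlg
variable {σ : Type*} [DecidableEq σ]

lemma polyFun_coeff_cpow (f : MvPowerSeries σ ℂ) (N : σ →₀ ℕ) {F : ℂ → ℂ} (hF : PolyFun F) :
    PolyFun (fun x => coeff N (cpow f (F x))) := by
  have h : (fun x => coeff N (cpow f (F x)))
      = fun x => ∑ k ∈ Finset.range (degN N + 1), binomC (F x) k * coeff N ((f-1)^k) := by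
    funext x; rw [coeff_cpow]
  rw [h]
  exact PolyFun.sum _ _ fun k _ => (hF.binomC' k).mul (PolyFun.const _)

lemma polyFun_coeff_cpow_mul (f g : MvPowerSeries σ ℂ) (N : σ →₀ ℕ) {F : ℂ → ℂ}
    (hF : PolyFun F) : PolyFun (fun x => coeff N (cpow f (F x) * g)) := by
  have h : (fun x => coeff N (cpow f (F x) * g))
      = fun x => ∑ p ∈ Finset.HasAntidiagonal.antidiagonal N, coeff p.1 (cpow f (F x)) * coeff p.2 g := by
    funext x; rw [coeff_mul]
  rw [h]
  exact PolyFun.sum _ _ fun p _ => (polyFun_coeff_cpow f p.1 hF).mul (PolyFun.const _)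

lemma cpow_zero' {f : MvPowerSeries σ ℂ} (hf : constantCoeff f = 1) : cpow f 0 = 1 := by
  simpa using cpow_natCast hf 0

lemma cpow_one' {f : MvPowerSeries σ ℂ} (hf : constantCoeff f = 1) : cpow f 1 = f := by
  simpa using cpow_natCast hf 1

lemma cpow_one_left (α : ℂ) : cpow (1 : MvPowerSeries σ ℂ) α = 1 := by
  ext N
  rw [coeff_cpow, Finset.sum_eq_single 0]
  · simp [binomC_zero]
  · intro k _ hk
    rw [sub_self, zero_pow hk, map_zero, mul_zero]
  · intro h; exact absurd (Finset.mem_range.2 (by omega)) h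

lemma cpow_add {f : MvPowerSeries σ ℂ} (hf : constantCoeff f = 1) (α β : ℂ) :
    cpow f α * cpow f β = cpow f (α + β) := by
  have h2 : ∀ (γ : ℂ) (n : ℕ), cpow f γ * cpow f (n : ℂ) = cpow f (γ + n) := by
    intro γ n
    ext N
    refine PolyFun.eq_on_nat (F := fun x => coeff N (cpow f x * cpow f (n : ℂ)))
      (G := fun x => coeff N (cpow f (x + n)))
      (polyFun_coeff_cpow_mul f _ N PolyFun.id')
      (polyFun_coeff_cpow f N (PolyFun.id'.add (PolyFun.const _))) (fun m => ?_) γ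
    rw [cpow_natCast hf, cpow_natCast hf, ← Nat.cast_add, cpow_natCast hf, ← pow_add]
  ext N
  have hcomm : (fun x => coeff N (cpow f α * cpow f x))
      = fun x => coeff N (cpow f x * cpow f α) := by
    funext x; rw [mul_comm]
  refine PolyFun.eq_on_nat (F := fun x => coeff N (cpow f α * cpow f x))
    (G := fun x => coeff N (cpow f (α + x)))
    (by rw [hcomm]; exact polyFun_coeff_cpow_mul f _ N PolyFun.id')
    (polyFun_coeff_cpow f N ((PolyFun.const α).add PolyFun.id')) (fun n => by rw [h2]) β

lemma cpow_pow {f : MvPowerSeries σ ℂ} (hf : constantCoeff f = 1) (α : ℂ) (n : ℕ) :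
    (cpow f α) ^ n = cpow f (α * n) := by
  induction n with
  | zero => simp [cpow_zero' hf]
  | succ n ih =>
    rw [pow_succ, ih, cpow_add hf, Nat.cast_add, Nat.cast_one, mul_add, mul_one]

lemma cpow_cpow {f : MvPowerSeries σ ℂ} (hf : constantCoeff f = 1) (α β : ℂ) :
    cpow (cpow f α) β = cpow f (α * β) := by
  ext N
  refine PolyFun.eq_on_nat (F := fun x => coeff N (cpow (cpow f α) x))
    (G := fun x => coeff N (cpow f (α * x)))
    (polyFun_coeff_cpow _ N PolyFun.id')
    (polyFun_coeff_cpow f N ((PolyFun.const α).mul PolyFun.id')) (fun n => ?_) β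
  rw [cpow_natCast (constantCoeff_cpow f α), cpow_pow hf]

lemma cpow_mul' {f g : MvPowerSeries σ ℂ} (hf : constantCoeff f = 1)
    (hg : constantCoeff g = 1) (α : ℂ) : cpow (f * g) α = cpow f α * cpow g α := by
  have hfg : constantCoeff (f * g) = 1 := by rw [map_mul, hf, hg, one_mul]
  ext N
  have hG : (fun x => coeff N (cpow f x * cpow g x))
      = fun x => ∑ p ∈ Finset.HasAntidiagonal.antidiagonal N, coeff p.1 (cpow f x) * coeff p.2 (cpow g x) := by
    funext x; rw [coeff_mul]
  refine PolyFun.eq_on_nat (F := fun x => coeff N (cpow (f * g) x))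
    (G := fun x => coeff N (cpow f x * cpow g x))
    (polyFun_coeff_cpow _ N PolyFun.id')
    (by rw [hG]; exact PolyFun.sum _ _ fun p _ =>
      (polyFun_coeff_cpow f p.1 PolyFun.id').mul (polyFun_coeff_cpow g p.2 PolyFun.id'))
    (fun n => ?_) α
  rw [cpow_natCast hfg, cpow_natCast hf, cpow_natCast hg, mul_pow]

lemma cpow_prod {ι : Type*} (s : Finset ι) (g : ι → MvPowerSeries σ ℂ)
    (hg : ∀ i ∈ s, constantCoeff (g i) = 1) (α : ℂ) :
    cpow (∏ i ∈ s, g i) α = ∏ i ∈ s, cpow (g i) α := by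
  classical
  induction s using Finset.induction_on with
  | empty => simpa using cpow_one_left α
  | @insert a s hnot ih =>
    rw [Finset.prod_insert hnot, Finset.prod_insert hnot,
      cpow_mul' (hg a (Finset.mem_insert_self a s))
        (by rw [map_prod]; exact Finset.prod_eq_one fun i hi =>
          hg i (Finset.mem_insert_of_mem hi)),
      ih fun i hi => hg i (Finset.mem_insert_of_mem hi)]

lemma prod_cpow {ι : Type*} {f : MvPowerSeries σ ℂ} (hf : constantCoeff f = 1)
    (t : Finset ι) (a : ι → ℂ) : ∏ j ∈ t, cpow f (a j) = cpow f (∑ j ∈ t, a j) := by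
  classical
  induction t using Finset.induction_on with
  | empty => simpa using (cpow_zero' hf).symm
  | @insert i t hnot ih =>
    rw [Finset.prod_insert hnot, Finset.sum_insert hnot, ih, cpow_add hf]

end CpowAlg

section Infra
variable {σ : Type*} [DecidableEq σ]

/-- `f` and `g` agree on all coefficients `≤ N`. -/
def AgreeBelow (N : σ →₀ ℕ) (f g : MvPowerSeries σ ℂ) : Prop :=
  ∀ M ≤ N, coeff M f = coeff M g

lemma AgreeBelow.refl (N : σ →₀ ℕ) (f : MvPowerSeries σ ℂ) : AgreeBelow N f f :=
  fun _ _ => rfl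

lemma AgreeBelow.mul {N : σ →₀ ℕ} {f f' g g' : MvPowerSeries σ ℂ}
    (hf : AgreeBelow N f f') (hg : AgreeBelow N g g') : AgreeBelow N (f * g) (f' * g') := by
  intro M hM
  rw [coeff_mul, coeff_mul]
  refine Finset.sum_congr rfl fun p hp => ?_
  rw [Finset.HasAntidiagonal.mem_antidiagonal] at hp
  have h1 : p.1 ≤ M := by rw [← hp]; exact le_add_right le_rfl
  have h2 : p.2 ≤ M := by rw [← hp]; exact le_add_left le_rfl
  rw [hf p.1 (h1.trans hM), hg p.2 (h2.trans hM)]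

lemma AgreeBelow.pow {N : σ →₀ ℕ} {f f' : MvPowerSeries σ ℂ}
    (hf : AgreeBelow N f f') (k : ℕ) : AgreeBelow N (f ^ k) (f' ^ k) := by
  induction k with
  | zero => exact AgreeBelow.refl N 1
  | succ k ih => rw [pow_succ, pow_succ]; exact ih.mul hf

lemma AgreeBelow.sub_one {N : σ →₀ ℕ} {f f' : MvPowerSeries σ ℂ} (hf : AgreeBelow N f f') :
    AgreeBelow N (f - 1) (f' - 1) := by
  intro M hM
  rw [map_sub, map_sub, hf M hM]

lemma AgreeBelow.cpow {N : σ →₀ ℕ} {f f' : MvPowerSeries σ ℂ}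
    (hf : AgreeBelow N f f') (α : ℂ) : AgreeBelow N (cpow f α) (cpow f' α) := by
  intro M hM
  rw [coeff_cpow, coeff_cpow]
  refine Finset.sum_congr rfl fun k _ => ?_
  rw [(hf.sub_one.pow k) M hM]

lemma AgreeBelow.prod {ι : Type*} {N : σ →₀ ℕ} (t : Finset ι)
    {f f' : ι → MvPowerSeries σ ℂ} (h : ∀ j ∈ t, AgreeBelow N (f j) (f' j)) :
    AgreeBelow N (∏ j ∈ t, f j) (∏ j ∈ t, f' j) := by
  classical
  induction t using Finset.induction_on with
  | empty => simpa using AgreeBelow.refl N 1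
  | @insert a t hnot ih =>
    rw [Finset.prod_insert hnot, Finset.prod_insert hnot]
    exact (h a (Finset.mem_insert_self a t)).mul
      (ih fun j hj => h j (Finset.mem_insert_of_mem hj))

/-- All coefficients of `f` at monomials not involving `j` match those of `1`. -/
def NiceAt (j : σ) (f : MvPowerSeries σ ℂ) : Prop :=
  ∀ M : σ →₀ ℕ, M j = 0 → coeff M f = coeff M (1 : MvPowerSeries σ ℂ)

lemma NiceAt.constantCoeff {j : σ} {f : MvPowerSeries σ ℂ} (h : NiceAt j f) :
    constantCoeff f = 1 := by
  have := h 0 rfl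
  simp only [coeff_zero_eq_constantCoeff, map_one] at this
  exact this

lemma NiceAt.mul_vanish {j : σ} {u v : MvPowerSeries σ ℂ}
    (hu : ∀ M : σ →₀ ℕ, M j = 0 → coeff M u = 0) :
    ∀ M : σ →₀ ℕ, M j = 0 → coeff M (u * v) = 0 := by
  intro M hM
  rw [coeff_mul]
  refine Finset.sum_eq_zero fun p hp => ?_
  rw [Finset.HasAntidiagonal.mem_antidiagonal] at hp
  have h1 : p.1 j = 0 := by
    have : p.1 j + p.2 j = M j := by rw [← hp]; rfl
    omega
  rw [hu p.1 h1, zero_mul]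

lemma NiceAt.cpow {j : σ} {f : MvPowerSeries σ ℂ} (h : NiceAt j f) (α : ℂ) :
    NiceAt j (cpow f α) := by
  have hu : ∀ M : σ →₀ ℕ, M j = 0 → coeff M (f - 1) = 0 := by
    intro M hM
    rw [map_sub, h M hM, sub_self]
  have hpow : ∀ k, 1 ≤ k → ∀ M : σ →₀ ℕ, M j = 0 → coeff M ((f - 1) ^ k) = 0 := by
    intro k hk
    obtain ⟨k, rfl⟩ := Nat.exists_eq_add_of_le hk
    intro M hM
    rw [add_comm, pow_add, pow_one]
    rw [mul_comm]
    exact NiceAt.mul_vanish hu M hM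
  intro M hM
  rcases eq_or_ne M 0 with rfl | hM0
  · simp only [coeff_zero_eq_constantCoeff, constantCoeff_cpow, map_one]
  · rw [coeff_cpow, Finset.sum_eq_zero, MvPowerSeries.coeff_one, if_neg hM0]
    intro k hk
    rcases Nat.eq_zero_or_pos k with rfl | hkpos
    · rw [pow_zero, MvPowerSeries.coeff_one, if_neg hM0, mul_zero]
    · rw [hpow k hkpos M hM, mul_zero]

lemma coeff_mul_nice {j : σ} {N : σ →₀ ℕ} (hN : N j = 0) {g : MvPowerSeries σ ℂ}
    (hg : NiceAt j g) (A : MvPowerSeries σ ℂ) : coeff N (A * g) = coeff N A := by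
  have : coeff N (A * g) = coeff N (A * 1) := by
    rw [coeff_mul, coeff_mul]
    refine Finset.sum_congr rfl fun p hp => ?_
    rw [Finset.HasAntidiagonal.mem_antidiagonal] at hp
    have h2 : p.2 j = 0 := by
      have : p.1 j + p.2 j = N j := by rw [← hp]; rfl
      omega
    rw [hg p.2 h2]
  rwa [mul_one] at this

lemma coeff_mul_prod_nice {N : σ →₀ ℕ} {g : σ → MvPowerSeries σ ℂ} (u : Finset σ)
    (hu : ∀ j ∈ u, NiceAt j (g j) ∧ N j = 0) (A : MvPowerSeries σ ℂ) :
    coeff N (A * ∏ j ∈ u, g j) = coeff N A := by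
  classical
  induction u using Finset.induction_on with
  | empty => rw [Finset.prod_empty, mul_one]
  | @insert a u hnot ih =>
    rw [Finset.prod_insert hnot, show A * (g a * ∏ j ∈ u, g j) = A * (∏ j ∈ u, g j) * g a by ring,
      coeff_mul_nice (hu a (Finset.mem_insert_self a u)).2 (hu a (Finset.mem_insert_self a u)).1,
      ih fun j hj => hu j (Finset.mem_insert_of_mem hj)]

lemma coeff_prod_nice_subset {N : σ →₀ ℕ} {g : σ → MvPowerSeries σ ℂ}
    (hg : ∀ j, NiceAt j (g j)) {s t : Finset σ} (hs : N.support ⊆ s) (hst : s ⊆ t) :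
    coeff N (∏ j ∈ t, g j) = coeff N (∏ j ∈ s, g j) := by
  classical
  rw [← Finset.prod_sdiff hst, mul_comm]
  refine coeff_mul_prod_nice (t \ s) (fun j hj => ⟨hg j, ?_⟩) _
  rcases Finset.mem_sdiff.1 hj with ⟨_, hjs⟩
  by_contra h
  exact hjs (hs (Finsupp.mem_support_iff.2 h))

lemma hasProdPS_unique {ι : Type*} {f : ι → MvPowerSeries σ ℂ} {P P' : MvPowerSeries σ ℂ}
    (h : HasProdPS f P) (h' : HasProdPS f P') : P = P' := by
  classical
  ext N
  obtain ⟨s, hs⟩ := h N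
  obtain ⟨s', hs'⟩ := h' N
  rw [← hs (s ∪ s') Finset.subset_union_left, hs' (s ∪ s') Finset.subset_union_right]

/-- The canonical value of the infinite product `∏_j (base j)^(c j)`. -/
noncomputable def limProd (base : σ → MvPowerSeries σ ℂ) (c : σ → ℂ) : MvPowerSeries σ ℂ :=
  fun N => coeff N (∏ j ∈ N.support, cpow (base j) (c j))

lemma coeff_limProd (base : σ → MvPowerSeries σ ℂ) (c : σ → ℂ) (N : σ →₀ ℕ) :
    coeff N (limProd base c) = coeff N (∏ j ∈ N.support, cpow (base j) (c j)) := by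
  rw [coeff_apply]; rfl

lemma hasProdPS_limProd {base : σ → MvPowerSeries σ ℂ} (hbase : ∀ j, NiceAt j (base j))
    (c : σ → ℂ) : HasProdPS (fun j => cpow (base j) (c j)) (limProd base c) := by
  intro N
  refine ⟨N.support, fun t ht => ?_⟩
  rw [coeff_limProd]
  exact coeff_prod_nice_subset (fun j => (hbase j).cpow (c j)) (le_refl _) ht

lemma constantCoeff_limProd (base : σ → MvPowerSeries σ ℂ) (c : σ → ℂ) :
    constantCoeff (limProd base c) = 1 := by
  rw [← coeff_zero_eq_constantCoeff, coeff_limProd]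
  simp

lemma limProd_ite {base : σ → MvPowerSeries σ ℂ} (hbase : ∀ j, NiceAt j (base j))
    (i : σ) (β : ℂ) : limProd base (fun m => if i = m then β else 0) = cpow (base i) β := by
  ext N
  rw [coeff_limProd]
  by_cases hi : i ∈ N.support
  · rw [Finset.prod_eq_single_of_mem i hi]
    · rw [if_pos rfl]
    · intro j _ hji
      rw [if_neg (fun h => hji h.symm), cpow_zero' (hbase j).constantCoeff]
  · have h1 : (∏ j ∈ N.support, cpow (base j) (if i = j then β else 0)) = 1 := by
      refine Finset.prod_eq_one fun j hj => ?_
      rw [if_neg (fun h => hi (by rw [h]; exact hj)), cpow_zero' (hbase j).constantCoeff]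
    rw [h1]
    have hNi : N i = 0 := by
      by_contra h
      exact hi (Finsupp.mem_support_iff.2 h)
    exact (((hbase i).cpow β) N hNi).symm

end Infra

section Transfer
variable {σ : Type*} [DecidableEq σ]

lemma agreeBelow_limProd {base : σ → MvPowerSeries σ ℂ} (hbase : ∀ k, NiceAt k (base k))
    (c : σ → ℂ) (N : σ →₀ ℕ) :
    AgreeBelow N (limProd base c) (∏ k ∈ N.support, cpow (base k) (c k)) := by
  intro M hM
  rw [coeff_limProd]
  exact (coeff_prod_nice_subset (fun k => (hbase k).cpow _) (le_refl _)
    (Finsupp.support_mono hM)).symm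

lemma hasProdPS_transfer {base : σ → MvPowerSeries σ ℂ} (hbase : ∀ k, NiceAt k (base k))
    (A : σ → σ → ℂ) (Qf : σ → MvPowerSeries σ ℂ) (hQf : ∀ j, Qf j = limProd base (A j))
    (c B : σ → ℂ)
    (hB : ∀ k, ∃ S : Finset σ, (∀ j ∉ S, c j * A j k = 0) ∧ (∑ j ∈ S, c j * A j k = B k)) :
    HasProdPS (fun j => cpow (Qf j) (c j)) (limProd base B) := by
  intro N
  choose S hS1 hS2 using hB
  refine ⟨N.support.biUnion S, fun t ht => ?_⟩
  have hc1 : ∀ k, constantCoeff (base k) = 1 := fun k => (hbase k).constantCoeff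
  have step1 : coeff N (∏ j ∈ t, cpow (Qf j) (c j))
      = coeff N (∏ j ∈ t, cpow (∏ k ∈ N.support, cpow (base k) (A j k)) (c j)) := by
    refine (AgreeBelow.prod t fun j _ => ?_) N (le_refl N)
    rw [hQf j]
    exact (agreeBelow_limProd hbase (A j) N).cpow (c j)
  have step2 : (∏ j ∈ t, cpow (∏ k ∈ N.support, cpow (base k) (A j k)) (c j))
      = ∏ k ∈ N.support, cpow (base k) (∑ j ∈ t, c j * A j k) := by
    have e1 : ∀ j, cpow (∏ k ∈ N.support, cpow (base k) (A j k)) (c j)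
        = ∏ k ∈ N.support, cpow (base k) (A j k * c j) := by
      intro j
      rw [cpow_prod _ _ (fun k _ => constantCoeff_cpow _ _)]
      exact Finset.prod_congr rfl fun k _ => cpow_cpow (hc1 k) _ _
    rw [Finset.prod_congr rfl fun j _ => e1 j, Finset.prod_comm]
    refine Finset.prod_congr rfl fun k _ => ?_
    rw [prod_cpow (hc1 k)]
    exact congrArg (cpow (base k)) (Finset.sum_congr rfl fun j _ => mul_comm _ _)
  have step3 : ∀ k ∈ N.support, (∑ j ∈ t, c j * A j k) = B k := by
    intro k hk
    rw [← hS2 k]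
    refine (Finset.sum_subset (fun j hj => ht (Finset.mem_biUnion.2 ⟨k, hk, hj⟩)) ?_).symm
    intro j _ hj
    exact hS1 k j hj
  rw [step1, step2, coeff_limProd]
  exact congrArg _ (Finset.prod_congr rfl fun k hk => by rw [step3 k hk])

lemma hasProdPS_cpow {ι : Type*} {g : ι → MvPowerSeries σ ℂ} {a : ι → ℂ}
    {P : MvPowerSeries σ ℂ} (hg : ∀ k, constantCoeff (g k) = 1)
    (h : HasProdPS (fun k => cpow (g k) (a k)) P) (α : ℂ) :
    HasProdPS (fun k => cpow (g k) (α * a k)) (cpow P α) := by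
  classical
  intro N
  choose s hs using h
  refine ⟨(Finset.Iic N).biUnion s, fun t ht => ?_⟩
  have e : (∏ k ∈ t, cpow (g k) (α * a k)) = cpow (∏ k ∈ t, cpow (g k) (a k)) α := by
    rw [cpow_prod _ _ (fun k _ => constantCoeff_cpow _ _)]
    exact Finset.prod_congr rfl fun k _ => by rw [cpow_cpow (hg k), mul_comm]
  rw [e]
  refine (AgreeBelow.cpow (f := ∏ k ∈ t, cpow (g k) (a k)) (f' := P) ?_ α) N (le_refl N)
  intro M hM
  exact hs M t (fun j hj => ht (Finset.mem_biUnion.2 ⟨M, Finset.mem_Iic.2 hM, hj⟩))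

end Transfer

section Construct
variable {H : Type*} [DecidableEq H]

lemma coeff_X_mul' (i : H) (f : MvPowerSeries H ℂ) (N : H →₀ ℕ) :
    coeff N (X i * f)
      = if Finsupp.single i 1 ≤ N then coeff (N - Finsupp.single i 1) f else 0 := by
  rw [X, coeff_monomial_mul]
  simp only [one_mul]

noncomputable def iterQ (G' : H → H → ℂ) : ℕ → H → MvPowerSeries H ℂ
  | 0 => fun _ => 1
  | n + 1 => fun i => 1 - X i * limProd (iterQ G' n) (G' i)

def AgreeDeg (d : ℕ) (f g : MvPowerSeries H ℂ) : Prop :=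
  ∀ M : H →₀ ℕ, degN M ≤ d → coeff M f = coeff M g

lemma AgreeDeg.agreeBelow {d : ℕ} {f g : MvPowerSeries H ℂ} (h : AgreeDeg d f g)
    {N : H →₀ ℕ} (hN : degN N ≤ d) : AgreeBelow N f g :=
  fun M hM => h M ((degN_mono hM).trans hN)

lemma AgreeDeg.limProd {d : ℕ} {R S : H → MvPowerSeries H ℂ}
    (h : ∀ j, AgreeDeg d (R j) (S j)) (c : H → ℂ) :
    AgreeDeg d (limProd R c) (limProd S c) := by
  intro M hM
  rw [coeff_limProd, coeff_limProd]
  exact (AgreeBelow.prod _ fun j _ => ((h j).agreeBelow hM).cpow (c j)) M (le_refl M)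

lemma degN_single (i : H) : degN (Finsupp.single i 1 : H →₀ ℕ) = 1 := by
  simp [degN]

lemma degN_sub_single {N : H →₀ ℕ} (h : Finsupp.single i 1 ≤ N) :
    degN (N - Finsupp.single i 1) + 1 = degN N := by
  have h1 : (N - Finsupp.single i 1) + Finsupp.single i 1 = N := tsub_add_cancel_of_le h
  calc degN (N - Finsupp.single i 1) + 1
      = degN (N - Finsupp.single i 1) + degN (Finsupp.single i 1 : H →₀ ℕ) := by
        rw [degN_single]
    _ = degN N := by rw [← degN_add, h1]

lemma iterQ_succ_agree (G' : H → H → ℂ) :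
    ∀ n, ∀ i, AgreeDeg n (iterQ G' n i) (iterQ G' (n + 1) i) := by
  intro n
  induction n with
  | zero =>
    intro i M hM
    have hM0 : M = 0 := by
      by_contra h
      have := degN_pos h
      omega
    subst hM0
    show coeff 0 (1 : MvPowerSeries H ℂ) = coeff 0 (1 - X i * _)
    rw [map_sub, coeff_X_mul', if_neg]
    · rw [sub_zero]
    · rw [Finsupp.single_le_iff]
      simp
  | succ n ih =>
    intro i M hM
    show coeff M (1 - X i * _) = coeff M (1 - X i * _)
    rw [map_sub, map_sub, coeff_X_mul', coeff_X_mul']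
    congr 1
    split_ifs with h
    · have hd : degN (M - Finsupp.single i 1) ≤ n := by
        have := degN_sub_single h
        omega
      exact (AgreeDeg.limProd (fun j => ih j) (G' i)) _ hd
    · rfl

lemma iterQ_agree (G' : H → H → ℂ) :
    ∀ {n m}, n ≤ m → ∀ i, AgreeDeg n (iterQ G' n i) (iterQ G' m i) := by
  intro n m h
  induction h with
  | refl => intro i M hM; rfl
  | @step m hnm ih =>
    intro i M hM
    rw [ih i M hM]
    exact iterQ_succ_agree G' m i M (le_trans hM hnm)

noncomputable def Qstd (G' : H → H → ℂ) : H → MvPowerSeries H ℂ :=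
  fun i N => coeff N (iterQ G' (degN N) i)

lemma coeff_Qstd (G' : H → H → ℂ) (i : H) (N : H →₀ ℕ) :
    coeff N (Qstd G' i) = coeff N (iterQ G' (degN N) i) := by
  rw [coeff_apply]; rfl

lemma Qstd_agree (G' : H → H → ℂ) (n : ℕ) (i : H) : AgreeDeg n (Qstd G' i) (iterQ G' n i) := by
  intro M hM
  rw [coeff_Qstd]
  exact iterQ_agree G' hM i M (le_refl _)

lemma Qstd_eq (G' : H → H → ℂ) (i : H) :
    Qstd G' i = 1 - X i * limProd (Qstd G') (G' i) := by
  ext N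
  have h1 : coeff N (1 - X i * limProd (Qstd G') (G' i))
      = coeff N (1 - X i * limProd (iterQ G' (degN N)) (G' i)) := by
    rw [map_sub, map_sub, coeff_X_mul', coeff_X_mul']
    congr 1
    split_ifs with h
    · refine (AgreeDeg.limProd (fun j => Qstd_agree G' (degN N) j) (G' i)) _ ?_
      have := degN_sub_single h
      omega
    · rfl
  rw [h1, coeff_Qstd]
  have h2 : coeff N (1 - X i * limProd (iterQ G' (degN N)) (G' i))
      = coeff N (iterQ G' (degN N + 1) i) := rfl
  rw [h2]
  exact iterQ_agree G' (Nat.le_succ _) i N (le_refl _)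

lemma Qstd_nice (G' : H → H → ℂ) (i : H) : NiceAt i (Qstd G' i) := by
  intro M hM
  rw [Qstd_eq G' i, map_sub, coeff_X_mul', if_neg, sub_zero]
  rw [Finsupp.single_le_iff, hM]
  omega

lemma Qstd_system (G' : H → H → ℂ) (i : H) :
    Qstd G' i + X i * limProd (Qstd G') (G' i) = 1 := by
  rw [Qstd_eq G' i]
  ring

theorem stdSys_unique {G' : H → H → ℂ} {R : H → MvPowerSeries H ℂ} (hR : InfStdSys G' R) :
    R = Qstd G' := by
  classical
  have key : ∀ d, ∀ N : H →₀ ℕ, degN N ≤ d → ∀ i, coeff N (R i) = coeff N (Qstd G' i) := by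
    intro d
    induction d with
    | zero =>
      intro N hN i
      have hN0 : N = 0 := by
        by_contra h
        have := degN_pos h
        omega
      subst hN0
      simp only [coeff_zero_eq_constantCoeff]
      rw [hR.1 i, (Qstd_nice G' i).constantCoeff]
    | succ d ih =>
      intro N hN i
      obtain ⟨P, hP, heq⟩ := hR.2 i
      have hRi : R i = 1 - X i * P := by rw [← heq]; ring
      rw [hRi, Qstd_eq G' i, map_sub, map_sub, coeff_X_mul', coeff_X_mul']
      congr 1
      split_ifs with h
      · set M := N - Finsupp.single i 1 with hM
        have hMd : degN M ≤ d := by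
          have := degN_sub_single h
          rw [← hM] at this
          omega
        obtain ⟨s, hs⟩ := hP M
        rw [← hs (s ∪ M.support) Finset.subset_union_left]
        have h2 : coeff M (limProd (Qstd G') (G' i))
            = coeff M (∏ j ∈ s ∪ M.support, cpow (Qstd G' j) (G' i j)) := by
          rw [coeff_limProd]
          exact (coeff_prod_nice_subset (fun j => (Qstd_nice G' j).cpow _) (le_refl _)
            Finset.subset_union_right).symm
        rw [h2]
        refine (AgreeBelow.prod _ fun j _ => AgreeBelow.cpow ?_ (G' i j)) M (le_refl M)
        intro M' hM'
        exact ih M' ((degN_mono hM').trans hMd) j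
      · rfl
  funext i
  ext N
  exact key (degN N) N (le_refl _) i

end Construct

section Main
variable {H : Type*} [DecidableEq H]

lemma sum_package {f : H → ℂ} (hfin : ({j | f j ≠ 0} : Set H).Finite) :
    ∃ S : Finset H, (∀ j ∉ S, f j = 0) ∧ ∑ j ∈ S, f j = ∑ᶠ j, f j := by
  refine ⟨hfin.toFinset, fun j hj => ?_, ?_⟩
  · by_contra h
    exact hj (hfin.mem_toFinset.2 h)
  · exact (finsum_eq_sum f hfin).symm

/-- The canonical solution of the full system. -/
noncomputable def Qsol (Dinv G' : H → H → ℂ) : H → MvPowerSeries H ℂ :=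
  fun i => limProd (Qstd G') (Dinv i)

variable {D Dinv G G' : H → H → ℂ}

lemma hasProd_D (hD : InvPair D Dinv) (G' : H → H → ℂ) (i : H) :
    HasProdPS (fun j => cpow (Qsol Dinv G' j) (D i j)) (Qstd G' i) := by
  have h := hasProdPS_transfer (Qstd_nice G') Dinv (Qsol Dinv G') (fun j => rfl)
    (D i) (fun k => if i = k then (1 : ℂ) else 0) (fun k => by
      obtain ⟨S, h1, h2⟩ := sum_package (hD.1 i k).1
      exact ⟨S, h1, by rw [h2, (hD.1 i k).2]⟩)
  rwa [limProd_ite (Qstd_nice G') i 1, cpow_one' (Qstd_nice G' i).constantCoeff] at h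

lemma hasProd_G_gen (hG' : MulDef G Dinv G') {Qf : H → MvPowerSeries H ℂ}
    {base : H → MvPowerSeries H ℂ} (hbase : ∀ k, NiceAt k (base k))
    (hQf : ∀ j, Qf j = limProd base (Dinv j)) (i : H) :
    HasProdPS (fun j => cpow (Qf j) (G i j)) (limProd base (G' i)) :=
  hasProdPS_transfer hbase Dinv Qf hQf (G i) (G' i) (fun k => by
    obtain ⟨S, h1, h2⟩ := sum_package (hG' i k).1
    exact ⟨S, h1, by rw [h2, (hG' i k).2]⟩)

lemma hasProd_canon_gen (hD : InvPair D Dinv) {Qf : H → MvPowerSeries H ℂ}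
    {base : H → MvPowerSeries H ℂ} (hbase : ∀ k, NiceAt k (base k))
    (hQf : ∀ j, Qf j = limProd base (Dinv j)) (i j : H) :
    HasProdPS (fun k => cpow (Qf k) (Dinv i j * D j k)) (cpow (base j) (Dinv i j)) := by
  have h := hasProdPS_transfer hbase Dinv Qf hQf (fun k => Dinv i j * D j k)
    (fun m => if j = m then Dinv i j else 0) (fun m => by
      obtain ⟨S, h1, h2⟩ := sum_package (hD.1 j m).1
      refine ⟨S, fun k hk => by rw [mul_assoc, h1 k hk, mul_zero], ?_⟩
      have : ∑ k ∈ S, Dinv i j * D j k * Dinv k m = Dinv i j * ∑ k ∈ S, D j k * Dinv k m := by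
        rw [Finset.mul_sum]
        exact Finset.sum_congr rfl fun k _ => by ring
      rw [this, h2, (hD.1 j m).2]
      split_ifs with hjm <;> simp [hjm])
  rwa [limProd_ite hbase j (Dinv i j)] at h

theorem Qsol_infSys (hD : InvPair D Dinv) (hG' : MulDef G Dinv G') :
    InfSys D G (Qsol Dinv G') := by
  refine ⟨fun i => constantCoeff_limProd _ _, fun i => ?_⟩
  exact ⟨Qstd G' i, limProd (Qstd G') (G' i), hasProd_D hD G' i,
    hasProd_G_gen hG' (Qstd_nice G') (fun j => rfl) i, Qstd_system G' i⟩

theorem Qsol_canonical (hD : InvPair D Dinv) :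
    IsCanonicalPS Dinv D (Qsol Dinv G') := by
  intro i
  exact ⟨fun j => cpow (Qstd G' j) (Dinv i j),
    fun j => hasProd_canon_gen hD (Qstd_nice G') (fun j => rfl) i j,
    hasProdPS_limProd (Qstd_nice G') (Dinv i)⟩

theorem canonical_unique (hD : InvPair D Dinv) (hG' : MulDef G Dinv G')
    {Qt : H → MvPowerSeries H ℂ} (hsys : InfSys D G Qt) (hcan : IsCanonicalPS Dinv D Qt) :
    Qt = Qsol Dinv G' := by
  classical
  choose P₁ P₂ h1 h2 h3 using hsys.2
  have hR1 : ∀ i, P₁ i = 1 - X i * P₂ i := fun i => by rw [← h3 i]; ring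
  have hRnice : ∀ i, NiceAt i (P₁ i) := by
    intro i M hM
    rw [hR1 i, map_sub, coeff_X_mul', if_neg, sub_zero]
    rw [Finsupp.single_le_iff, hM]
    omega
  have hinner : ∀ i j, HasProdPS (fun k => cpow (Qt k) (Dinv i j * D j k))
      (cpow (P₁ j) (Dinv i j)) :=
    fun i j => hasProdPS_cpow hsys.1 (h1 j) (Dinv i j)
  have hQtform : ∀ i, Qt i = limProd P₁ (Dinv i) := by
    intro i
    obtain ⟨inner, hin1, hin2⟩ := hcan i
    have he : inner = fun j => cpow (P₁ j) (Dinv i j) :=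
      funext fun j => hasProdPS_unique (hin1 j) (hinner i j)
    rw [he] at hin2
    exact hasProdPS_unique hin2 (hasProdPS_limProd hRnice (Dinv i))
  have hP2 : ∀ i, P₂ i = limProd P₁ (G' i) := fun i =>
    hasProdPS_unique (h2 i) (hasProd_G_gen hG' hRnice hQtform i)
  have hRsys : InfStdSys G' P₁ := by
    refine ⟨fun i => (hRnice i).constantCoeff, fun i => ?_⟩
    exact ⟨limProd P₁ (G' i), hasProdPS_limProd hRnice (G' i), by rw [← hP2 i]; exact h3 i⟩
  have hRQ : P₁ = Qstd G' := stdSys_unique hRsys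
  funext i
  rw [hQtform i, hRQ]
  rfl

end Main



/-- For infinite matrices `D, G` satisfying conditions (D) and (G'),
the infinite `Q`-system has a unique canonical solution, given by
`Q_i = ∏_j (Q'_j)^{(D⁻¹)_{ij}}` for the unique solution `Q'` of the standard infinite
`Q`-system with matrix `G' = G D⁻¹`. -/
theorem statement11 {H : Type*} [Countable H] [Infinite H] [DecidableEq H]
    (HL : ℕ → Finset H) (hmono : Monotone HL) (hcover : ∀ i : H, ∃ L, i ∈ HL L)
    (D Dinv G G' : H → H → ℂ)
    (hD : InvPair D Dinv) (hG' : MulDef G Dinv G') :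
    (∃! Q : H → MvPowerSeries H ℂ, InfSys D G Q ∧ IsCanonicalPS Dinv D Q) ∧
    (∀ Q' : H → MvPowerSeries H ℂ, InfStdSys G' Q' →
      ∀ Q : H → MvPowerSeries H ℂ, InfSys D G Q → IsCanonicalPS Dinv D Q →
        ∀ i, HasProdPS (fun j => cpow (Q' j) (Dinv i j)) (Q i)) := by
  
  constructor
  · exact ⟨Qsol Dinv G', ⟨Qsol_infSys hD hG', Qsol_canonical hD⟩,
      fun Qt ht => canonical_unique hD hG' ht.1 ht.2⟩
  · intro Q'' hQ'' Qt hsys hcan i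
    rw [stdSys_unique hQ'', canonical_unique hD hG' hsys hcan]
    exact hasProdPS_limProd (Qstd_nice G') (Dinv i)
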